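/- For each k with 1 ≤ k ≤ n and each prime power q > n, the vector h = (log q)·(1, 2, ..., k, k, ..., k) ∈ ℝ^n (i.e., h_m = min(m,k)·log q) is an average entropy function: there exists a discrete random vector X = (X_1,...,X_n) whose average entropy function equals h. -/
import Mathlib

open Finset Real Polynomial

set_option linter.unusedSectionVars false

/-- Joint Shannon entropy (natural log) of the coordinates in `α` of the random
vector `X` defined on a finite sample space `Ω` with probability mass `p`. -/
noncomputable def jointEntropy {Ω E : Type*} [Fintype Ω] [Fintype E] [DecidableEq E] {n : ℕ}
    (p : Ω → ℝ) (X : Fin n → Ω → E) (α : Finset (Fin n)) : ℝ :=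
  ∑ y : α → E, Real.negMulLog (∑ ω ∈ univ.filter (fun ω => ∀ i : α, X i ω = y i), p ω)

section Aux

variable {F : Type} [Field F] [Fintype F] [DecidableEq F] {n : ℕ}

/-- Evaluation of the polynomial with coefficients `c` (degree < k) at `a i` for `i ∈ α`. -/
noncomputable def evLin (k : ℕ) (a : Fin n → F) (α : Finset (Fin n)) :
    (Fin k → F) →ₗ[F] (α → F) where
  toFun c := fun i => ∑ j : Fin k, c j * (a i) ^ (j : ℕ)
  map_add' c d := by funext i; simp [add_mul, Finset.sum_add_distrib]
  map_smul' r c := by funext i; simp [Finset.mul_sum, mul_assoc]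

lemma evLin_apply (k : ℕ) (a : Fin n → F) (α : Finset (Fin n)) (c : Fin k → F) (i : α) :
    evLin k a α c i = ∑ j : Fin k, c j * (a i) ^ (j : ℕ) := rfl

lemma evLin_inj {k : ℕ} (a : Fin n ↪ F) (α : Finset (Fin n)) (hα : k ≤ α.card) :
    Function.Injective (evLin k a α) := by
  rw [injective_iff_map_eq_zero]
  intro c hc
  set P : F[X] := ∑ j : Fin k, C (c j) * X ^ (j : ℕ) with hP
  have hcoeff : ∀ j : Fin k, P.coeff j = c j := by
    intro j
    rw [hP, Polynomial.finset_sum_coeff]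
    simp only [Polynomial.coeff_C_mul, Polynomial.coeff_X_pow]
    rw [Finset.sum_eq_single j] <;> simp +contextual [Fin.val_inj, eq_comm]
  have hPzero : P = 0 := by
    by_contra hne
    have hdeg : P.degree < (k : ℕ) := by
      refine lt_of_le_of_lt (Polynomial.degree_sum_le _ _) ?_
      rw [Finset.sup_lt_iff (by exact_mod_cast WithBot.bot_lt_coe k)]
      intro j _
      exact lt_of_le_of_lt (Polynomial.degree_C_mul_X_pow_le _ _)
        (by exact_mod_cast j.isLt)
    have hnd : P.natDegree < k := (Polynomial.natDegree_lt_iff_degree_lt hne).mpr hdeg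
    refine hne (Polynomial.eq_zero_of_natDegree_lt_card_of_eval_eq_zero P
      (f := fun i : α => a i) (fun i₁ i₂ h => Subtype.ext (a.injective h)) ?_ ?_)
    · intro i
      have := congrFun hc i
      simpa [hP, Polynomial.eval_finset_sum, evLin_apply] using this
    · rw [Fintype.card_coe]; exact lt_of_lt_of_le hnd hα
  funext j
  rw [← hcoeff j, hPzero]
  simp

lemma evLin_surj {k : ℕ} (a : Fin n ↪ F) (α : Finset (Fin n)) (hα : α.card ≤ k) (hkn : k ≤ n) :
    Function.Surjective (evLin k a α) := by
  obtain ⟨β, hsub, _, hβcard⟩ := Finset.exists_subsuperset_card_eq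
    (subset_univ α) hα (by simpa using hkn)
  have hbij : Function.Bijective (evLin k a β) := by
    refine (Fintype.bijective_iff_injective_and_card _).mpr ⟨evLin_inj a β hβcard.ge, ?_⟩
    simp [Fintype.card_fun, Fintype.card_coe, hβcard]
  intro y
  obtain ⟨c, hc⟩ := hbij.2 (fun i => if h : (i : Fin n) ∈ α then y ⟨i, h⟩ else 0)
  refine ⟨c, funext fun i => ?_⟩
  have := congrFun hc ⟨i, hsub i.2⟩
  simpa [evLin_apply, i.2] using this

lemma fiber_card_eq {k : ℕ} (a : Fin n ↪ F) (α : Finset (Fin n)) (hα : α.card ≤ k) (hkn : k ≤ n)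
    (y : α → F) :
    (univ.filter fun c : Fin k → F => evLin k a α c = y).card
      = (univ.filter fun c : Fin k → F => evLin k a α c = 0).card := by
  obtain ⟨d, hd⟩ := evLin_surj a α hα hkn y
  refine Finset.card_bij' (fun c _ => c - d) (fun c _ => c + d) ?_ ?_ ?_ ?_
  · intro c hc
    simp only [mem_filter, mem_univ, true_and] at hc ⊢
    rw [map_sub, hc, hd, sub_self]
  · intro c hc
    simp only [mem_filter, mem_univ, true_and] at hc ⊢
    rw [map_add, hc, hd, zero_add]
  · intro c _; simp
  · intro c _; simp

lemma fiber_card_mul {k : ℕ} (a : Fin n ↪ F) (α : Finset (Fin n)) (hα : α.card ≤ k)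
    (hkn : k ≤ n) (y : α → F) :
    (univ.filter fun c : Fin k → F => evLin k a α c = y).card * Fintype.card F ^ α.card
      = Fintype.card F ^ k := by
  have h := Finset.card_eq_sum_card_fiberwise
      (s := (univ : Finset (Fin k → F))) (t := (univ : Finset (α → F)))
      (f := fun c => evLin k a α c) (fun x _ => mem_univ _)
  rw [Finset.sum_congr rfl (fun z _ => fiber_card_eq a α hα hkn z)] at h
  rw [Finset.sum_const, card_univ, card_univ, Fintype.card_fun, Fintype.card_fun,
    Fintype.card_coe, Fintype.card_fin, smul_eq_mul] at h
  rw [fiber_card_eq a α hα hkn y, h]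
  ring

lemma jointEntropy_eval_le {k : ℕ} (a : Fin n ↪ F) (α : Finset (Fin n)) (hα : α.card ≤ k)
    (hkn : k ≤ n) :
    jointEntropy (fun _ : Fin k → F => ((Fintype.card F : ℝ) ^ k)⁻¹)
        (fun i c => ∑ j : Fin k, c j * (a i) ^ (j : ℕ)) α
      = α.card * Real.log (Fintype.card F) := by
  have hq0 : (0:ℝ) < (Fintype.card F : ℝ) := by exact_mod_cast Fintype.card_pos
  unfold jointEntropy
  have hval : ∀ y : α → F,
      (∑ ω ∈ univ.filter (fun c : Fin k → F => ∀ i : α, (∑ j : Fin k, c j * (a i) ^ (j:ℕ)) = y i),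
        ((Fintype.card F : ℝ) ^ k)⁻¹) = ((Fintype.card F : ℝ) ^ α.card)⁻¹ := by
    intro y
    have hfilter : (univ.filter fun c : Fin k → F =>
        ∀ i : α, (∑ j : Fin k, c j * (a i) ^ (j:ℕ)) = y i)
        = univ.filter fun c => evLin k a α c = y := by
      apply Finset.filter_congr; intro c _
      rw [funext_iff]; exact Iff.rfl
    rw [hfilter, Finset.sum_const, nsmul_eq_mul]
    have hc := fiber_card_mul a α hα hkn y
    have hcR : ((univ.filter fun c : Fin k → F => evLin k a α c = y).card : ℝ)
        * (Fintype.card F : ℝ) ^ α.card = (Fintype.card F : ℝ) ^ k := by exact_mod_cast hc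
    field_simp
    linarith [hcR]
  rw [Finset.sum_congr rfl (fun y _ => by rw [hval y])]
  rw [Finset.sum_const, card_univ, Fintype.card_fun, Fintype.card_coe, nsmul_eq_mul]
  rw [Real.negMulLog, Real.log_inv, Real.log_pow]
  push_cast
  field_simp

lemma jointEntropy_eval_ge {k : ℕ} (a : Fin n ↪ F) (α : Finset (Fin n)) (hα : k ≤ α.card) :
    jointEntropy (fun _ : Fin k → F => ((Fintype.card F : ℝ) ^ k)⁻¹)
        (fun i c => ∑ j : Fin k, c j * (a i) ^ (j : ℕ)) α
      = k * Real.log (Fintype.card F) := by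
  have hq0 : (0:ℝ) < (Fintype.card F : ℝ) := by exact_mod_cast Fintype.card_pos
  have hinj := evLin_inj a α hα
  unfold jointEntropy
  have hfilter : ∀ y : α → F, (univ.filter fun c : Fin k → F =>
      ∀ i : α, (∑ j : Fin k, c j * (a i) ^ (j:ℕ)) = y i)
      = univ.filter fun c => evLin k a α c = y := by
    intro y; apply Finset.filter_congr; intro c _
    rw [funext_iff]; exact Iff.rfl
  have hle : ∀ y : α → F, (univ.filter fun c : Fin k → F => evLin k a α c = y).card ≤ 1 := by
    intro y
    refine Finset.card_le_one.mpr (fun c hc d hd => hinj ?_)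
    rw [(mem_filter.1 hc).2, (mem_filter.1 hd).2]
  have hterm : ∀ y : α → F,
      Real.negMulLog (((univ.filter fun c : Fin k → F => evLin k a α c = y).card : ℝ)
        * ((Fintype.card F : ℝ) ^ k)⁻¹)
      = ((univ.filter fun c : Fin k → F => evLin k a α c = y).card : ℝ)
        * Real.negMulLog (((Fintype.card F : ℝ) ^ k)⁻¹) := by
    intro y
    rcases Nat.le_one_iff_eq_zero_or_eq_one.mp (hle y) with h | h <;> simp [h]
  have hsum : ∑ y : α → F,
      ((univ.filter fun c : Fin k → F => evLin k a α c = y).card : ℝ)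
      = (Fintype.card F : ℝ) ^ k := by
    have h := Finset.card_eq_sum_card_fiberwise
        (s := (univ : Finset (Fin k → F))) (t := (univ : Finset (α → F)))
        (f := fun c => evLin k a α c) (fun x _ => mem_univ _)
    rw [card_univ, Fintype.card_fun, Fintype.card_fin] at h
    rw [← Nat.cast_pow, h, Nat.cast_sum]
  calc ∑ y : α → F, Real.negMulLog (∑ ω ∈ univ.filter (fun c : Fin k → F =>
        ∀ i : α, (∑ j : Fin k, c j * (a i) ^ (j:ℕ)) = y i), ((Fintype.card F : ℝ) ^ k)⁻¹)
      = ∑ y : α → F, ((univ.filter fun c : Fin k → F => evLin k a α c = y).card : ℝ)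
        * Real.negMulLog (((Fintype.card F : ℝ) ^ k)⁻¹) := by
        refine Finset.sum_congr rfl (fun y _ => ?_)
        rw [hfilter y, Finset.sum_const, nsmul_eq_mul, hterm y]
    _ = (Fintype.card F : ℝ) ^ k * Real.negMulLog (((Fintype.card F : ℝ) ^ k)⁻¹) := by
        rw [← Finset.sum_mul, hsum]
    _ = k * Real.log (Fintype.card F) := by
        rw [Real.negMulLog, Real.log_inv, Real.log_pow]
        field_simp

end Aux

/-- For `1 ≤ k ≤ n` and a prime power `q > n`, the vector `h_m = min(m,k)·log q`
is an average entropy function of some discrete random vector. -/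
theorem min_vector_is_average_entropy (n k q : ℕ) (hk1 : 1 ≤ k) (hkn : k ≤ n)
    (hq : IsPrimePow q) (hqn : n < q) :
    ∃ (Ω : Type) (_ : Fintype Ω) (E : Type) (_ : Fintype E) (_ : DecidableEq E)
      (p : Ω → ℝ) (X : Fin n → Ω → E),
      (∀ ω, 0 ≤ p ω) ∧ (∑ ω, p ω = 1) ∧
      ∀ m, 1 ≤ m → m ≤ n →
        ((n.choose m : ℝ))⁻¹ * ∑ α ∈ powersetCard m (univ : Finset (Fin n)),
            jointEntropy p X α
          = (min m k : ℕ) * Real.log q := by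
  classical
  obtain ⟨pp, e, hpp, he, hpe⟩ := hq
  haveI : Fact pp.Prime := ⟨hpp.nat_prime⟩
  let F := GaloisField pp e
  haveI : Fintype F := Fintype.ofFinite F
  have hcard : Fintype.card F = q := by
    rw [← Nat.card_eq_fintype_card, GaloisField.card pp e he.ne', hpe]
  obtain ⟨a⟩ : Nonempty (Fin n ↪ F) := by
    apply Function.Embedding.nonempty_of_card_le
    rw [Fintype.card_fin, hcard]; omega
  have hq0 : (0:ℝ) < (q : ℝ) := by
    have : 0 < q := lt_of_le_of_lt (Nat.zero_le n) hqn
    exact_mod_cast this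
  refine ⟨Fin k → F, inferInstance, F, inferInstance, inferInstance,
    fun _ => ((Fintype.card F : ℝ) ^ k)⁻¹,
    fun i c => ∑ j : Fin k, c j * (a i) ^ (j : ℕ), ?_, ?_, ?_⟩
  · intro ω; positivity
  · rw [Finset.sum_const, card_univ, Fintype.card_fun, Fintype.card_fin, nsmul_eq_mul,
      hcard]
    push_cast
    field_simp
  · intro m hm1 hmn
    have hconst : ∀ α ∈ powersetCard m (univ : Finset (Fin n)),
        jointEntropy (fun _ : Fin k → F => ((Fintype.card F : ℝ) ^ k)⁻¹)
          (fun i c => ∑ j : Fin k, c j * (a i) ^ (j : ℕ)) α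
        = (min m k : ℕ) * Real.log q := by
      intro α hα
      have hαcard : α.card = m := (Finset.mem_powersetCard.mp hα).2
      rcases le_total m k with h | h
      · rw [jointEntropy_eval_le a α (hαcard ▸ h) hkn, hαcard, hcard,
          min_eq_left h]
      · rw [jointEntropy_eval_ge a α (hαcard ▸ h), hcard, min_eq_right h]
    rw [Finset.sum_congr rfl hconst, Finset.sum_const, Finset.card_powersetCard,
      card_univ, Fintype.card_fin, nsmul_eq_mul]
    have hch : (0:ℝ) < (n.choose m : ℝ) := by exact_mod_cast Nat.choose_pos hmn
    field_simp
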